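/- Let F ⊂ ∂Ω ∩ C_R(0,0) be a set of boundary points of a vanishing-Reifenberg-flat parabolic domain such that for every (Y,s) ∈ F and every ρ ≤ 2R, the orthogonal projection p onto the plane {x_n = 0} satisfies H^n(p(C_ρ(Y,s) ∩ ∂Ω)) > θ ρ^{n+1} with θ = c(n)ε, and the boundary is ε²-flat at all scales ≤ R. Then F is a Lip(1,1/2) graph over {x_n = 0}: for all (Y,s),(Z,t) ∈ F, ‖(Y,s)−(Z,t)‖ ≤ C(n,ε)(|y−z| + |s−t|^{1/2}), where y,z are the projections of Y,Z onto {x_n=0}. -/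

import Mathlib

open MeasureTheory Real Set Filter Topology
open scoped ENNReal NNReal BigOperators

noncomputable section

abbrev Pt (n : ℕ) := EuclideanSpace ℝ (Fin n) × ℝ

/-- Real inner product on `ℝ^n`. -/
def ip {n : ℕ} (x y : EuclideanSpace ℝ (Fin n)) : ℝ := inner ℝ x y

/-- Parabolic distance between points of `ℝ^n × ℝ`. -/
def pdist {n : ℕ} (p q : Pt n) : ℝ := dist p.1 q.1 + Real.sqrt |p.2 - q.2|

/-- The parabolic cylinder of radius `R` centered at `c`. -/
def pcyl {n : ℕ} (c : Pt n) (R : ℝ) : Set (Pt n) :=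
  {p | dist p.1 c.1 < R ∧ |p.2 - c.2| < R ^ 2}

/-- The (unnormalized) parabolic surface measure: integrate the `(n-1)`-dimensional
Hausdorff measure of the time slices. -/
def sliceMeasure (n : ℕ) (F : Set (Pt n)) : ℝ≥0∞ :=
  ∫⁻ t : ℝ, μH[(n : ℝ) - 1] {X : EuclideanSpace ℝ (Fin n) | (X, t) ∈ F}

/-- Orthogonal projection onto the `n`-plane through the origin with spatial unit normal
`e` (containing the time direction). -/
def proj {n : ℕ} (e : EuclideanSpace ℝ (Fin n)) (p : Pt n) : Pt n :=
  (p.1 - ip p.1 e • e, p.2)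

/-! ### Auxiliary lemmas -/

lemma st9_ip_comm {n : ℕ} (x y : EuclideanSpace ℝ (Fin n)) : ip x y = ip y x :=
  (real_inner_comm x y).symm

lemma st9_ip_sub_left {n : ℕ} (x y z : EuclideanSpace ℝ (Fin n)) :
    ip (x - y) z = ip x z - ip y z := inner_sub_left x y z

lemma st9_ip_smul_left {n : ℕ} (c : ℝ) (x y : EuclideanSpace ℝ (Fin n)) :
    ip (c • x) y = c * ip x y := real_inner_smul_left x y c

lemma st9_ip_smul_right {n : ℕ} (c : ℝ) (x y : EuclideanSpace ℝ (Fin n)) :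
    ip x (c • y) = c * ip x y := real_inner_smul_right x y c

lemma st9_ip_sub_right {n : ℕ} (x y z : EuclideanSpace ℝ (Fin n)) :
    ip x (y - z) = ip x y - ip x z := inner_sub_right x y z

lemma st9_ip_self {n : ℕ} (e : EuclideanSpace ℝ (Fin n)) (he : ‖e‖ = 1) : ip e e = 1 := by
  rw [ip, real_inner_self_eq_norm_sq, he]; norm_num

lemma st9_ip_proj_e {n : ℕ} (e x : EuclideanSpace ℝ (Fin n)) (he : ‖e‖ = 1) :
    ip (x - ip x e • e) e = 0 := by
  rw [st9_ip_sub_left, st9_ip_smul_left, st9_ip_self e he, mul_one, sub_self]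

lemma st9_abs_ip_le {n : ℕ} (x y : EuclideanSpace ℝ (Fin n)) : |ip x y| ≤ ‖x‖ * ‖y‖ :=
  abs_real_inner_le_norm x y

lemma st9_norm_sq_proj {n : ℕ} (e x : EuclideanSpace ℝ (Fin n)) (he : ‖e‖ = 1) :
    ‖x - ip x e • e‖ ^ 2 = ‖x‖ ^ 2 - (ip x e) ^ 2 := by
  have h0 : ip (x - ip x e • e) e = 0 := st9_ip_proj_e e x he
  have hx : x = (x - ip x e • e) + ip x e • e := by abel
  have hinner : inner ℝ (x - ip x e • e) (ip x e • e) = (0:ℝ) := by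
    rw [real_inner_smul_right]
    exact mul_eq_zero_of_right (ip x e) h0
  have : ‖x‖ ^ 2 = ‖x - ip x e • e‖ ^ 2 + ‖ip x e • e‖ ^ 2 := by
    conv_lhs => rw [hx]
    rw [norm_add_sq_real, hinner]; ring
  have hsm : ‖ip x e • e‖ = |ip x e| := by
    rw [norm_smul, he, Real.norm_eq_abs, mul_one]
  rw [this, hsm, sq_abs]; ring

lemma st9_norm_proj_le {n : ℕ} (e x : EuclideanSpace ℝ (Fin n)) (he : ‖e‖ = 1) :
    ‖x - ip x e • e‖ ≤ ‖x‖ := by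
  have := st9_norm_sq_proj e x he
  nlinarith [norm_nonneg (x - ip x e • e), norm_nonneg x, sq_nonneg (ip x e)]

lemma st9_proj_sub {n : ℕ} (e x y : EuclideanSpace ℝ (Fin n)) :
    (x - ip x e • e) - (y - ip y e • e) = (x - y) - ip (x - y) e • e := by
  rw [st9_ip_sub_left, sub_smul]
  abel

lemma st9_consIsom (m : ℕ) :
    Isometry (fun x : EuclideanSpace ℝ (Fin (m+1)) =>
      ((WithLp.equiv 2 (Fin (m+2) → ℝ)).symm
        (Fin.cons 0 (WithLp.equiv 2 (Fin (m+1) → ℝ) x)))) := by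
  refine Isometry.of_dist_eq fun x y => ?_
  rw [EuclideanSpace.dist_eq, EuclideanSpace.dist_eq]
  congr 1
  rw [Fin.sum_univ_succ]
  simp

lemma st9_boxBound (m : ℕ) (w ρ : ℝ) (hw : 0 ≤ w) (hρ : 0 ≤ ρ) :
    μH[(m:ℝ)+1] {x : EuclideanSpace ℝ (Fin (m+1)) | |x 0| ≤ w ∧ ∀ i, |x i| ≤ ρ}
      ≤ ENNReal.ofReal (((m:ℝ)+1)^(m+1) * ((2*w) * (2*ρ)^m)) := by
  set d : Fin (m+1) → ℝ := Fin.cons w (fun _ => ρ) with hd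
  set pibox : Set (Fin (m+1) → ℝ) := Set.pi univ (fun i => Icc (-(d i)) (d i)) with hpibox
  set f : (Fin (m+1) → ℝ) → EuclideanSpace ℝ (Fin (m+1)) :=
    fun x => (WithLp.equiv 2 (Fin (m+1) → ℝ)).symm x with hf
  have hsub : {x : EuclideanSpace ℝ (Fin (m+1)) | |x 0| ≤ w ∧ ∀ i, |x i| ≤ ρ}
      ⊆ f '' pibox := by
    rintro x ⟨h0, hall⟩
    refine ⟨WithLp.equiv 2 _ x, fun i _ => ?_, rfl⟩
    rw [mem_Icc, ← abs_le]
    induction i using Fin.cases with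
    | zero => simpa [hd] using h0
    | succ j => simpa [hd] using hall j.succ
  have hlip : LipschitzWith (((m:ℝ≥0)+1) ^ ((2:ℝ)⁻¹)) f := by
    have := PiLp.antilipschitzWith_ofLp 2 (fun _ : Fin (m+1) => ℝ)
    have h := this.to_rightInverse (WithLp.equiv 2 (Fin (m+1) → ℝ)).right_inv
    simpa [hf, WithLp.equiv_symm_apply] using h
  have hvol : μH[(m:ℝ)+1] pibox = ENNReal.ofReal (2*w) * ENNReal.ofReal (2*ρ)^m := by
    have hcard : (m:ℝ)+1 = ((Fintype.card (Fin (m+1)) : ℕ) : ℝ) := by simp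
    rw [hcard, MeasureTheory.hausdorffMeasure_pi_real, hpibox, volume_pi_pi]
    rw [Fin.prod_univ_succ]
    simp only [hd, Fin.cons_zero, Fin.cons_succ, Real.volume_Icc]
    rw [Finset.prod_const]
    congr 2 <;> [ring; (congr 1; ring); simp]
  have him := hlip.hausdorffMeasure_image_le (d := (m:ℝ)+1) (by positivity) pibox
  calc μH[(m:ℝ)+1] {x : EuclideanSpace ℝ (Fin (m+1)) | |x 0| ≤ w ∧ ∀ i, |x i| ≤ ρ}
      ≤ μH[(m:ℝ)+1] (f '' pibox) := measure_mono hsub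
    _ ≤ (((((m:ℝ≥0)+1) ^ ((2:ℝ)⁻¹) : ℝ≥0)) : ℝ≥0∞) ^ ((m:ℝ)+1) * μH[(m:ℝ)+1] pibox := him
    _ ≤ ENNReal.ofReal (((m:ℝ)+1)^(m+1)) * ENNReal.ofReal ((2*w) * (2*ρ)^m) := by
        rw [hvol]
        refine mul_le_mul' ?_ (le_of_eq ?_)
        · have hb : (((m:ℝ≥0)+1)^((2:ℝ)⁻¹)) ≤ ((m:ℝ≥0)+1) := by
            calc (((m:ℝ≥0)+1)^((2:ℝ)⁻¹)) ≤ ((m:ℝ≥0)+1)^((1:ℝ)) :=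
                  NNReal.rpow_le_rpow_of_exponent_le (le_add_of_nonneg_left (by positivity)) (by norm_num)
              _ = ((m:ℝ≥0)+1) := NNReal.rpow_one _
          calc (((((m:ℝ≥0)+1) ^ ((2:ℝ)⁻¹) : ℝ≥0)) : ℝ≥0∞) ^ ((m:ℝ)+1)
              ≤ ((((m:ℝ≥0)+1) : ℝ≥0∞)) ^ ((m:ℝ)+1) :=
                ENNReal.rpow_le_rpow (by exact_mod_cast hb) (by positivity)
            _ = ((((m:ℝ≥0)+1) : ℝ≥0∞)) ^ ((m+1:ℕ)) := by
                rw [← ENNReal.rpow_natCast]; norm_num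
            _ = ENNReal.ofReal (((m:ℝ)+1)^(m+1)) := by
                rw [ENNReal.ofReal_pow (by positivity)]
                congr 1
                rw [ENNReal.ofReal_add (by positivity) (by norm_num)]
                simp [ENNReal.ofReal_natCast]
        · rw [ENNReal.ofReal_mul (by norm_num : (0:ℝ) ≤ 2),
            ← ENNReal.ofReal_pow (by positivity : (0:ℝ) ≤ 2*ρ),
            ← ENNReal.ofReal_mul (by norm_num : (0:ℝ) ≤ 2),
            ← ENNReal.ofReal_mul (by positivity)]
    _ = ENNReal.ofReal (((m:ℝ)+1)^(m+1) * ((2*w) * (2*ρ)^m)) := by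
        rw [← ENNReal.ofReal_mul (by positivity)]

lemma st9_basisExt (m : ℕ) (e u : EuclideanSpace ℝ (Fin (m+2))) (he : ‖e‖ = 1) (hu : ‖u‖ = 1)
    (heu : (inner ℝ e u : ℝ) = 0) :
    ∃ b : OrthonormalBasis (Fin (m+2)) ℝ (EuclideanSpace ℝ (Fin (m+2))),
      b 0 = e ∧ b 1 = u := by
  set v : Fin (m+2) → EuclideanSpace ℝ (Fin (m+2)) := fun i => if i = 0 then e else u with hv
  have hcard : Module.finrank ℝ (EuclideanSpace ℝ (Fin (m+2))) = Fintype.card (Fin (m+2)) := by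
    simp [finrank_euclideanSpace]
  have horth : Orthonormal ℝ (({0, 1} : Set (Fin (m+2))).restrict v) := by
    rw [orthonormal_iff_ite]
    rintro ⟨i, hi⟩ ⟨j, hj⟩
    simp only [Set.mem_insert_iff, Set.mem_singleton_iff] at hi hj
    have h01 : (0 : Fin (m+2)) ≠ 1 := by
      simp [Fin.ext_iff]
    have hee : (inner ℝ e e : ℝ) = 1 := by rw [real_inner_self_eq_norm_sq, he]; norm_num
    have huu : (inner ℝ u u : ℝ) = 1 := by rw [real_inner_self_eq_norm_sq, hu]; norm_num
    have hue : (inner ℝ u e : ℝ) = 0 := by rw [real_inner_comm]; exact heu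
    rcases hi with rfl | rfl <;> rcases hj with rfl | rfl <;>
      simp [hv, restrict, h01, h01.symm, Subtype.ext_iff, hee, huu, heu, hue, he, hu]
  obtain ⟨b, hb⟩ := horth.exists_orthonormalBasis_extension_of_card_eq hcard
  refine ⟨b, ?_, ?_⟩
  · simpa [hv] using hb 0 (by simp)
  · have := hb 1 (by simp)
    simpa [hv, show (1 : Fin (m+2)) ≠ 0 by simp [Fin.ext_iff]] using this

lemma st9_sliceBound (m : ℕ) (ρ w : ℝ) (hρ : 0 < ρ) (hw : 0 ≤ w) (S : Set (Pt (m+2))) (s : ℝ)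
    (Y' e u : EuclideanSpace ℝ (Fin (m+2))) (he : ‖e‖ = 1) (hu : ‖u‖ = 1)
    (heu : ip e u = 0)
    (hS : ∀ z ∈ S, |z.2 - s| < ρ^2 ∧ ip (z.1 - Y') e = 0 ∧ |ip (z.1 - Y') u| ≤ w ∧
      ‖z.1 - Y'‖ ≤ ρ) :
    sliceMeasure (m+2) S ≤
      ENNReal.ofReal (2*ρ^2) * ENNReal.ofReal (((m:ℝ)+1)^(m+1) * ((2*w) * (2*ρ)^m)) := by
  obtain ⟨b, hb0, hb1⟩ := st9_basisExt m e u he hu heu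
  set M : ℝ≥0∞ := ENNReal.ofReal (((m:ℝ)+1)^(m+1) * ((2*w) * (2*ρ)^m)) with hM
  set Bx : Set (EuclideanSpace ℝ (Fin (m+1))) :=
    {x | |x 0| ≤ w ∧ ∀ i, |x i| ≤ ρ} with hBx
  set ι : EuclideanSpace ℝ (Fin (m+1)) → EuclideanSpace ℝ (Fin (m+2)) :=
    fun x => ((WithLp.equiv 2 (Fin (m+2) → ℝ)).symm
        (Fin.cons 0 (WithLp.equiv 2 (Fin (m+1) → ℝ) x))) with hι
  set g : EuclideanSpace ℝ (Fin (m+2)) → EuclideanSpace ℝ (Fin (m+2)) :=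
    fun X => b.repr (X - Y') with hg
  have hgiso : Isometry g :=
    b.repr.isometry.comp (Isometry.of_dist_eq fun x y => dist_sub_right x y Y')
  have hslice : ∀ t : ℝ,
      μH[(m:ℝ)+1] {X : EuclideanSpace ℝ (Fin (m+2)) | (X, t) ∈ S} ≤
        (Ioo (s - ρ^2) (s + ρ^2)).indicator (fun _ => M) t := by
    intro t
    by_cases ht : t ∈ Ioo (s - ρ^2) (s + ρ^2)
    · rw [indicator_of_mem ht]
      have hsub : g '' {X : EuclideanSpace ℝ (Fin (m+2)) | (X, t) ∈ S} ⊆ ι '' Bx := by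
        rintro y ⟨X, hX, rfl⟩
        obtain ⟨-, hXe, hXu, hXn⟩ := hS (X, t) hX
        have hcoord : ∀ i, g X i = (inner ℝ (b i) (X - Y') : ℝ) := fun i =>
          b.repr_apply_apply (X - Y') i
        have habs : ∀ i, |g X i| ≤ ρ := by
          intro i
          have h2 : ‖g X‖ = ‖X - Y'‖ := b.repr.norm_map _
          have h3 : ‖g X‖ ≤ ρ := by rw [h2]; exact hXn
          calc |g X i| = ‖g X i‖ := (Real.norm_eq_abs _).symm
            _ ≤ ‖g X‖ := by
                rw [EuclideanSpace.norm_eq,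
                  show ‖g X i‖ = Real.sqrt (‖g X i‖^2) by rw [Real.sqrt_sq (norm_nonneg _)]]
                apply Real.sqrt_le_sqrt
                exact Finset.single_le_sum (f := fun j => ‖g X j‖^2)
                  (fun _ _ => sq_nonneg _) (Finset.mem_univ i)
            _ ≤ ρ := h3
        have h0 : g X 0 = 0 := by
          rw [hcoord 0, hb0, real_inner_comm]; exact hXe
        have h1' : |g X 1| ≤ w := by
          rw [hcoord 1, hb1, real_inner_comm]; exact hXu
        refine ⟨(WithLp.equiv 2 (Fin (m+1) → ℝ)).symm
          (Fin.tail (WithLp.equiv 2 (Fin (m+2) → ℝ) (g X))), ⟨?_, ?_⟩, ?_⟩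
        · simpa [Fin.tail] using h1'
        · intro i
          simpa [Fin.tail] using habs i.succ
        · simp only [hι]
          have : Fin.cons (0:ℝ) (Fin.tail (WithLp.equiv 2 (Fin (m+2) → ℝ) (g X)))
              = WithLp.equiv 2 (Fin (m+2) → ℝ) (g X) := by
            rw [← h0]
            exact Fin.cons_self_tail _
          rw [Equiv.apply_symm_apply, this]
          exact (WithLp.equiv 2 (Fin (m+2) → ℝ)).symm_apply_apply _
      calc μH[(m:ℝ)+1] {X : EuclideanSpace ℝ (Fin (m+2)) | (X, t) ∈ S}
          = μH[(m:ℝ)+1] (g '' {X : EuclideanSpace ℝ (Fin (m+2)) | (X, t) ∈ S}) :=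
            (hgiso.hausdorffMeasure_image (Or.inl (by positivity)) _).symm
        _ ≤ μH[(m:ℝ)+1] (ι '' Bx) := measure_mono hsub
        _ = μH[(m:ℝ)+1] Bx := (st9_consIsom m).hausdorffMeasure_image (Or.inl (by positivity)) _
        _ ≤ M := st9_boxBound m w ρ hw hρ.le
    · rw [indicator_of_notMem ht]
      have hempty : {X : EuclideanSpace ℝ (Fin (m+2)) | (X, t) ∈ S} = ∅ := by
        ext X
        simp only [mem_setOf_eq, mem_empty_iff_false, iff_false]
        intro hX
        obtain ⟨h1, -, -, -⟩ := hS (X, t) hX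
        rcases abs_lt.1 h1 with ⟨ha, hb⟩
        exact ht ⟨by linarith, by linarith⟩
      rw [hempty, measure_empty]
  have hdim : ((m+2 : ℕ) : ℝ) - 1 = (m:ℝ)+1 := by push_cast; ring
  calc sliceMeasure (m+2) S
      = ∫⁻ t : ℝ, μH[(m:ℝ)+1] {X : EuclideanSpace ℝ (Fin (m+2)) | (X, t) ∈ S} := by
        rw [sliceMeasure, hdim]
    _ ≤ ∫⁻ t : ℝ, (Ioo (s - ρ^2) (s + ρ^2)).indicator (fun _ => M) t :=
        lintegral_mono hslice
    _ = M * volume (Ioo (s - ρ^2) (s + ρ^2)) := lintegral_indicator_const measurableSet_Ioo M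
    _ = ENNReal.ofReal (2*ρ^2) * M := by
        rw [Real.volume_Ioo, mul_comm]
        congr 1
        ring_nf

lemma st9_key (n : ℕ) (hn : 1 ≤ n) (ε ρ : ℝ) (hε : 0 < ε) (hε1 : ε ≤ 1/3) (hρ : 0 < ρ)
    (Ω : Set (Pt n)) (p : Pt n) (e ν : EuclideanSpace ℝ (Fin n)) (he : ‖e‖ = 1)
    (hν : ‖ν‖ = 1)
    (hflat : ∀ q ∈ frontier Ω ∩ pcyl p ρ, |ip (q.1 - p.1) ν| ≤ ε ^ 2 * ρ)
    (hmeas : ENNReal.ofReal ((4 * 2^(n+3) * ((n:ℝ)+1)^(n+1)) * ε * ρ ^ (n + 1)) <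
        sliceMeasure n (proj e '' (pcyl p ρ ∩ frontier Ω))) :
    ε ≤ |ip e ν| := by
  by_cases h12 : (1:ℝ)/2 ≤ |ip e ν|
  · linarith
  push_neg at h12
  match n, hn with
  | 1, _ =>
      exfalso
      have he0 : |e 0| = 1 := by
        have := he
        rw [EuclideanSpace.norm_eq, Fin.sum_univ_one, Real.sqrt_sq (norm_nonneg _),
          Real.norm_eq_abs] at this
        exact this
      have hν0 : |ν 0| = 1 := by
        have := hν
        rw [EuclideanSpace.norm_eq, Fin.sum_univ_one, Real.sqrt_sq (norm_nonneg _),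
          Real.norm_eq_abs] at this
        exact this
      have hipeq : ip e ν = e 0 * ν 0 := by
        simp [ip, PiLp.inner_apply, Fin.sum_univ_one, RCLike.inner_apply, conj_trivial, mul_comm]
      rw [hipeq, abs_mul, he0, hν0] at h12
      norm_num at h12
  | (m+2), _ =>
      set a : ℝ := ip e ν with ha
      set ν' : EuclideanSpace ℝ (Fin (m+2)) := ν - ip ν e • e with hν'
      have hν'e : ip ν' e = 0 := st9_ip_proj_e e ν he
      have hνe : ip ν e = a := st9_ip_comm ν e
      have hnsq : ‖ν'‖^2 = 1 - a^2 := by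
        rw [hν', st9_norm_sq_proj e ν he, hν, hνe]; norm_num
      have ha2 : a^2 < 1/4 := by
        have := sq_abs a
        nlinarith [abs_nonneg a]
      have hn2 : 1/2 ≤ ‖ν'‖ := by nlinarith [norm_nonneg ν']
      have hν'pos : 0 < ‖ν'‖ := by linarith
      set u : EuclideanSpace ℝ (Fin (m+2)) := ‖ν'‖⁻¹ • ν' with hu'
      have hu : ‖u‖ = 1 := by
        rw [hu', norm_smul, norm_inv, norm_norm, inv_mul_cancel₀ (ne_of_gt hν'pos)]
      have heu : ip e u = 0 := by
        rw [hu', st9_ip_smul_right, st9_ip_comm e ν', hν'e, mul_zero]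
      set w : ℝ := 2*(|a| + ε^2)*ρ with hw'
      have hw : 0 ≤ w := by positivity
      have hinv2 : ‖ν'‖⁻¹ ≤ 2 := by
        rw [inv_le_comm₀ hν'pos (by norm_num)]
        linarith
      -- verify hS for the slice bound
      have hSB := st9_sliceBound m ρ w hρ hw (proj e '' (pcyl p ρ ∩ frontier Ω)) p.2
        (p.1 - ip p.1 e • e) e u he hu heu ?_
      swap
      · rintro z ⟨q, ⟨⟨hq1, hq2⟩, hqΩ⟩, rfl⟩
        have hz1 : (proj e q).1 - (p.1 - ip p.1 e • e)
            = (q.1 - p.1) - ip (q.1 - p.1) e • e := by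
          rw [proj]
          exact st9_proj_sub e q.1 p.1
        have hz2 : (proj e q).2 = q.2 := rfl
        have hvρ : ‖q.1 - p.1‖ ≤ ρ := by
          rw [← dist_eq_norm]; exact hq1.le
        refine ⟨by rw [hz2]; exact hq2, ?_, ?_, ?_⟩
        · rw [hz1]; exact st9_ip_proj_e e (q.1 - p.1) he
        · rw [hz1]
          set v : EuclideanSpace ℝ (Fin (m+2)) := q.1 - p.1 with hv
          have hflatv : |ip v ν| ≤ ε^2*ρ := hflat q ⟨hqΩ, hq1, hq2⟩
          have hve : |ip v e| ≤ ρ := by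
            calc |ip v e| ≤ ‖v‖ * ‖e‖ := st9_abs_ip_le v e
              _ ≤ ρ := by rw [he, mul_one]; exact hvρ
          have hid1 : ip (v - ip v e • e) u = ‖ν'‖⁻¹ * ip (v - ip v e • e) ν := by
            rw [hu', st9_ip_smul_right]
            congr 1
            rw [hν', st9_ip_sub_right, st9_ip_smul_right,
              st9_ip_proj_e e v he, mul_zero, sub_zero]
          have hid2 : ip (v - ip v e • e) ν = ip v ν - ip v e * ip e ν := by
            rw [st9_ip_sub_left, st9_ip_smul_left]
          rw [hid1, hid2, abs_mul, abs_inv, abs_norm]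
          have habs2 : |ip v ν - ip v e * a| ≤ ε^2*ρ + ρ*|a| := by
            calc |ip v ν - ip v e * a| ≤ |ip v ν| + |ip v e * a| := abs_sub _ _
              _ ≤ ε^2*ρ + ρ*|a| := by
                  rw [abs_mul]
                  have := mul_le_mul_of_nonneg_right hve (abs_nonneg a)
                  linarith
          calc ‖ν'‖⁻¹ * |ip v ν - ip v e * a| ≤ 2 * (ε^2*ρ + ρ*|a|) := by
                apply mul_le_mul hinv2 habs2 (abs_nonneg _) (by norm_num)
            _ = w := by rw [hw']; ring
        · rw [hz1]
          exact le_trans (st9_norm_proj_le e (q.1 - p.1) he) hvρ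
      -- combine with the measure lower bound
      have hr0 : ENNReal.ofReal ((4 * 2^(m+2+3) * (((m+2:ℕ):ℝ)+1)^(m+2+1)) * ε * ρ ^ (m+2+1))
          < ENNReal.ofReal (2*ρ^2 * (((m:ℝ)+1)^(m+1) * ((2*w) * (2*ρ)^m))) :=
        lt_of_lt_of_le hmeas (hSB.trans (le_of_eq (ENNReal.ofReal_mul (by positivity)).symm))
      have hr := (ENNReal.ofReal_lt_ofReal_iff_of_nonneg (by positivity)).1 hr0
      push_cast at hr
      set K1 : ℝ := ((m:ℝ)+1)^(m+1) with hK1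
      set B : ℝ := ((m:ℝ)+3)^(m+3) with hB
      have hK1B : K1 ≤ B := by
        rw [hK1, hB]
        calc ((m:ℝ)+1)^(m+1) ≤ ((m:ℝ)+3)^(m+1) :=
              pow_le_pow_left₀ (by positivity) (by linarith) _
          _ ≤ ((m:ℝ)+3)^(m+3) := pow_le_pow_right₀ (by linarith) (by omega)
      have e1 : 4 * (2:ℝ)^(m+2+3) * ((m:ℝ)+2+1)^(m+2+1) * ε * ρ^(m+2+1)
          = (128*(2:ℝ)^m*B*ε)*ρ^(m+3) := by rw [hB]; ring
      have e2 : 2*ρ^2 * (K1 * ((2*w) * (2*ρ)^m))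
          = (8*(2:ℝ)^m*K1*(|a|+ε^2))*ρ^(m+3) := by rw [hw']; ring
      have hfinal : (128*(2:ℝ)^m*B*ε)*ρ^(m+3) < (8*(2:ℝ)^m*K1*(|a|+ε^2))*ρ^(m+3) := by
        rw [← e1, ← e2]; exact hr
      have hρP : (0:ℝ) < ρ^(m+3) := by positivity
      have hc : 128*(2:ℝ)^m*B*ε < 8*(2:ℝ)^m*K1*(|a|+ε^2) :=
        (mul_lt_mul_iff_left₀ hρP).1 hfinal
      have h2m : (0:ℝ) < 2^m := by positivity
      have hBpos : (0:ℝ) < B := by rw [hB]; positivity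
      have hnn : (0:ℝ) ≤ |a|+ε^2 := by positivity
      have h2' : 8*(2:ℝ)^m*K1*(|a|+ε^2) ≤ 8*(2:ℝ)^m*B*(|a|+ε^2) := by
        have := mul_le_mul_of_nonneg_right (mul_le_mul_of_nonneg_left hK1B
          (by positivity : (0:ℝ) ≤ 8*(2:ℝ)^m)) hnn
        calc 8*(2:ℝ)^m*K1*(|a|+ε^2) = 8*(2:ℝ)^m*K1*(|a|+ε^2) := rfl
          _ ≤ 8*(2:ℝ)^m*B*(|a|+ε^2) := this
      have h16 : 16*ε < |a| + ε^2 := by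
        have hT : (0:ℝ) < 8*(2:ℝ)^m*B := by positivity
        have e3 : 8*(2:ℝ)^m*B*(16*ε) = 128*(2:ℝ)^m*B*ε := by ring
        have h3 : 8*(2:ℝ)^m*B*(16*ε) < 8*(2:ℝ)^m*B*(|a|+ε^2) := by
          rw [e3]; exact lt_of_lt_of_le hc h2'
        exact lt_of_mul_lt_mul_left h3 hT.le
      have hsq : ε*ε ≤ ε*(1/3) := mul_le_mul_of_nonneg_left hε1 hε.le
      have hsq' : ε^2 ≤ 1/3*ε := by rw [sq]; linarith
      linarith

lemma st9_arith (ε d s' dd a ρ : ℝ) (hε : 0 < ε) (hε1 : ε ≤ 1/3)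
    (h1 : a*ε ≤ ε^2*ρ + dd) (h2 : d ≤ dd + a) (h3 : ρ ≤ 3/2*(d+s'))
    (hd : 0 ≤ d) (hs : 0 ≤ s') (hdd : 0 ≤ dd) (ha : 0 ≤ a) :
    ε*(d+s') ≤ (2*ε+2)*(dd+s') := by
  nlinarith [mul_nonneg (mul_nonneg (by linarith : (0:ℝ) ≤ 1/3 - ε) hε.le) hd,
    mul_nonneg (mul_nonneg (by linarith : (0:ℝ) ≤ 1/3 - ε) hε.le) hs,
    mul_nonneg hε.le hdd, mul_nonneg hε.le hs,
    mul_le_mul_of_nonneg_left h2 hε.le,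
    mul_le_mul_of_nonneg_left h3 (sq_nonneg ε), sq_nonneg ε]

/-- points of `∂Ω` where the boundary projects onto a large set form a
`Lip(1,1/2)` graph.  If `∂Ω` is `ε²`-flat at all scales `≤ 2R` around the points of
`F ⊆ ∂Ω ∩ C_R(0,0)`, and around each point of `F` and at each scale `ρ ≤ 2R` the
projection of `C_ρ ∩ ∂Ω` onto `{x_n = 0}` has measure `> θ ρ^{n+1}` with `θ = c(n) ε`,
then `‖(Y,s) - (Z,t)‖ ≤ C(n,ε)(|y - z| + |s - t|^{1/2})` for all `(Y,s), (Z,t) ∈ F`. -/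
theorem statement9 (n : ℕ) :
    ∃ c : ℝ, 0 < c ∧ ∃ ε₀ : ℝ, 0 < ε₀ ∧
      ∀ ε : ℝ, 0 < ε → ε ≤ ε₀ →
        ∃ C : ℝ, 0 < C ∧
          ∀ (Ω F : Set (Pt n)) (R : ℝ) (e : EuclideanSpace ℝ (Fin n)),
            0 < R → ‖e‖ = 1 → F ⊆ frontier Ω ∩ pcyl (0 : Pt n) R →
            (∀ p ∈ F, ∀ ρ : ℝ, 0 < ρ → ρ ≤ 2 * R →
              ∃ ν : EuclideanSpace ℝ (Fin n), ‖ν‖ = 1 ∧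
                ∀ q ∈ frontier Ω ∩ pcyl p ρ, |ip (q.1 - p.1) ν| ≤ ε ^ 2 * ρ) →
            (∀ p ∈ F, ∀ ρ : ℝ, 0 < ρ → ρ ≤ 2 * R →
              ENNReal.ofReal (c * ε * ρ ^ (n + 1)) <
                sliceMeasure n (proj e '' (pcyl p ρ ∩ frontier Ω))) →
            ∀ p ∈ F, ∀ q ∈ F,
              pdist p q ≤
                C * (‖(p.1 - ip p.1 e • e) - (q.1 - ip q.1 e • e)‖ +
                  Real.sqrt |p.2 - q.2|) := by
  refine ⟨4 * 2^(n+3) * ((n:ℝ)+1)^(n+1), by positivity, 1/3, by norm_num,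
    fun ε hε hε1 => ⟨2 + 2/ε, by positivity, ?_⟩⟩
  intro Ω F R e hR he hF hflat hmeas p hp q hq
  have hCnn : (0:ℝ) ≤ 2 + 2/ε := by positivity
  set S' : ℝ := Real.sqrt |p.2 - q.2| with hS'
  have hS'0 : 0 ≤ S' := Real.sqrt_nonneg _
  have hS'sq : S'^2 = |p.2 - q.2| := Real.sq_sqrt (abs_nonneg _)
  set D : ℝ := ‖(p.1 - ip p.1 e • e) - (q.1 - ip q.1 e • e)‖ with hD
  have hD0 : 0 ≤ D := norm_nonneg _
  rw [pdist]
  by_cases hn0 : n = 0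
  · subst hn0
    have hpq : p.1 = q.1 := Subsingleton.elim _ _
    rw [hpq, dist_self, ← hS']
    have hone : (1:ℝ) ≤ 2 + 2/ε := by
      have : (0:ℝ) ≤ 2/ε := by positivity
      linarith
    have := mul_le_mul_of_nonneg_right hone (add_nonneg hD0 hS'0)
    rw [one_mul] at this
    linarith
  have hn1 : 1 ≤ n := Nat.one_le_iff_ne_zero.2 hn0
  obtain ⟨hpΩ, hp1, hp2⟩ : p ∈ frontier Ω ∧ dist p.1 0 < R ∧ |p.2| < R^2 := by
    obtain ⟨h1, h2, h3⟩ := hF hp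
    exact ⟨h1, by simpa using h2, by simpa using h3⟩
  obtain ⟨hqΩ, hq1, hq2⟩ : q ∈ frontier Ω ∧ dist q.1 0 < R ∧ |q.2| < R^2 := by
    obtain ⟨h1, h2, h3⟩ := hF hq
    exact ⟨h1, by simpa using h2, by simpa using h3⟩
  set M0 : ℝ := max (dist p.1 q.1) S' with hM0
  by_cases hM00 : M0 ≤ 0
  · have hd0 : dist p.1 q.1 = 0 :=
      le_antisymm (le_trans (le_max_left _ _) hM00) dist_nonneg
    have hs0 : S' = 0 := le_antisymm (le_trans (le_max_right _ _) hM00) hS'0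
    rw [← hS', hd0, hs0]
    simpa using mul_nonneg hCnn hD0
  push_neg at hM00
  have hdR : dist p.1 q.1 < 2*R := by
    calc dist p.1 q.1 ≤ dist p.1 0 + dist 0 q.1 := dist_triangle _ _ _
      _ < 2*R := by rw [dist_comm (0 : EuclideanSpace ℝ (Fin n)) q.1]; linarith
  have hS'R : S' < 2*R := by
    have habs : |p.2 - q.2| ≤ |p.2| + |q.2| := abs_sub p.2 q.2
    nlinarith [hS'sq, hS'0]
  have hM0R : M0 < 2*R := max_lt hdR hS'R
  set ρ : ℝ := min (2*R) (3/2 * M0) with hρdef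
  have hρpos : 0 < ρ := lt_min (by linarith) (by linarith)
  have hρ2R : ρ ≤ 2*R := min_le_left _ _
  have hM0ρ : M0 < ρ := lt_min hM0R (by linarith)
  have hqp : q ∈ pcyl p ρ := by
    constructor
    · rw [dist_comm]
      exact lt_of_le_of_lt (le_max_left _ _) hM0ρ
    · have h1 : S' < ρ := lt_of_le_of_lt (le_max_right _ _) hM0ρ
      have h2 : |q.2 - p.2| = S'^2 := by rw [hS'sq, abs_sub_comm]
      rw [h2]
      nlinarith
  obtain ⟨ν, hν, hflatν⟩ := hflat p hp ρ hρpos hρ2R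
  have hkey : ε ≤ |ip e ν| :=
    st9_key n hn1 ε ρ hε hε1 hρpos Ω p e ν he hν hflatν (hmeas p hp ρ hρpos hρ2R)
  have hflatq : |ip (q.1 - p.1) ν| ≤ ε^2*ρ := hflatν q ⟨hqΩ, hqp⟩
  set v : EuclideanSpace ℝ (Fin n) := p.1 - q.1 with hv
  have hvflat : |ip v ν| ≤ ε^2*ρ := by
    have : ip v ν = -(ip (q.1 - p.1) ν) := by
      rw [hv, show p.1 - q.1 = -(q.1 - p.1) by abel, ip, inner_neg_left]; rfl
    rw [this, abs_neg]
    exact hflatq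
  have hproj : (p.1 - ip p.1 e • e) - (q.1 - ip q.1 e • e) = v - ip v e • e :=
    st9_proj_sub e p.1 q.1
  have hπvD : ‖v - ip v e • e‖ = D := by rw [hD, hproj]
  set A : ℝ := |ip v e| with hA
  have hA0 : 0 ≤ A := abs_nonneg _
  have hid : ip (v - ip v e • e) ν = ip v ν - ip v e * ip e ν := by
    rw [st9_ip_sub_left, st9_ip_smul_left]
  have hAa : A * |ip e ν| ≤ ε^2*ρ + D := by
    have h1 : |ip v e * ip e ν| = |ip v ν - ip (v - ip v e • e) ν| := by
      rw [hid]; congr 1; ring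
    have h2 : |ip (v - ip v e • e) ν| ≤ D := by
      calc |ip (v - ip v e • e) ν| ≤ ‖v - ip v e • e‖ * ‖ν‖ := st9_abs_ip_le _ _
        _ = D := by rw [hν, hπvD, mul_one]
    calc A * |ip e ν| = |ip v e * ip e ν| := (abs_mul _ _).symm
      _ ≤ |ip v ν| + |ip (v - ip v e • e) ν| := by
          rw [h1]; exact abs_sub _ _
      _ ≤ ε^2*ρ + D := add_le_add hvflat h2
  have hAε : A * ε ≤ ε^2*ρ + D :=
    le_trans (mul_le_mul_of_nonneg_left hkey hA0) hAa
  have hdist : dist p.1 q.1 ≤ D + A := by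
    have hveq : v = (v - ip v e • e) + ip v e • e := by abel
    calc dist p.1 q.1 = ‖v‖ := dist_eq_norm _ _
      _ ≤ ‖v - ip v e • e‖ + ‖ip v e • e‖ := by
          conv_lhs => rw [hveq]
          exact norm_add_le _ _
      _ = D + A := by rw [hπvD, norm_smul, he, mul_one, Real.norm_eq_abs]
  have hρ3 : ρ ≤ 3/2 * (dist p.1 q.1 + S') := by
    have h1 : ρ ≤ 3/2 * M0 := min_le_right _ _
    have h2 : M0 ≤ dist p.1 q.1 + S' :=
      max_le (le_add_of_nonneg_right hS'0) (le_add_of_nonneg_left dist_nonneg)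
    linarith
  -- final absorption
  have key2 : ε * (dist p.1 q.1 + S') ≤ (2*ε + 2) * (D + S') :=
    st9_arith ε (dist p.1 q.1) S' D A ρ hε hε1 hAε hdist hρ3 dist_nonneg hS'0 hD0 hA0
  have hrw : (2 + 2/ε) = (2*ε + 2)/ε := by field_simp
  rw [hrw, div_mul_eq_mul_div, le_div_iff₀ hε]
  calc (dist p.1 q.1 + S') * ε = ε * (dist p.1 q.1 + S') := by ring
    _ ≤ (2*ε + 2) * (D + S') := key2
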